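/- The map 𝔭 sending a (k+1)-core γ to the sequence (λ_1,…,λ_ℓ), where λ_i is the number of cells in row i of γ with hook length at most k, is a bijection from the set of (k+1)-cores onto the set of partitions whose parts are all at most k. -/

import Mathlib

open scoped Classical

/-- A partition given as a weakly decreasing, finitely supported
function `ℕ → ℕ` (row `i`, counted from the bottom, has `p i` cells). -/
def IsPartitionFun (p : ℕ → ℕ) : Prop :=
  (∀ i, p (i + 1) ≤ p i) ∧ ∃ N, ∀ i, N ≤ i → p i = 0

/-- Hook length of the square `(i, j)` (0-indexed) in the partition `p`. -/
noncomputable def hookLen (p : ℕ → ℕ) (i j : ℕ) : ℕ :=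
  (p i - j) + Set.ncard {i' : ℕ | i < i' ∧ j < p i'}

/-- A partition is an `m`-core if no cell has hook length `m`. -/
def IsCore (m : ℕ) (p : ℕ → ℕ) : Prop :=
  ∀ i j, j < p i → hookLen p i j ≠ m

/-- Number of cells of row `i` of `p` whose hook length is at most `k`. -/
noncomputable def rowKB (k : ℕ) (p : ℕ → ℕ) (i : ℕ) : ℕ :=
  Set.ncard {j : ℕ | j < p i ∧ hookLen p i j ≤ k}

/-- Number of cells of column `j` of `p` whose hook length is at most `k`. -/
noncomputable def colKB (k : ℕ) (p : ℕ → ℕ) (j : ℕ) : ℕ :=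
  Set.ncard {i : ℕ | j < p i ∧ hookLen p i j ≤ k}

/-- The `(k+1)`-residue of the square `(i, j)`, namely `j - i mod (k+1)`. -/
def res (k i j : ℕ) : ZMod (k + 1) := (j : ZMod (k + 1)) - (i : ZMod (k + 1))

/-- The conjugate partition. -/
noncomputable def conjFun (p : ℕ → ℕ) (j : ℕ) : ℕ := Set.ncard {i : ℕ | j < p i}


namespace StmtAux

/-- A finite lower set of `ℕ` is `Iio` of its cardinality. -/
lemma lower_eq_Iio {T : Set ℕ} (hfin : T.Finite) (hdc : ∀ t, t + 1 ∈ T → t ∈ T) :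
    T = Set.Iio T.ncard := by
  rcases T.eq_empty_or_nonempty with h | h
  · rw [h]; ext t; simp
  · have hdown : ∀ d t, t + d ∈ T → t ∈ T := by
      intro d
      induction d with
      | zero => intro t ht; simpa using ht
      | succ n ih =>
        intro t ht
        exact ih t (hdc (t + n) ht)
    have hne : hfin.toFinset.Nonempty := by
      rwa [Set.Finite.toFinset_nonempty]
    set mx := hfin.toFinset.max' hne with hmx
    have hmxT : mx ∈ T := by
      have := hfin.toFinset.max'_mem hne
      rwa [Set.Finite.mem_toFinset] at this
    have hle : ∀ t ∈ T, t ≤ mx := by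
      intro t ht
      exact hfin.toFinset.le_max' t (by rwa [Set.Finite.mem_toFinset])
    have hT : T = Set.Iic mx := by
      ext t
      constructor
      · intro ht; exact hle t ht
      · intro ht
        rw [Set.mem_Iic] at ht
        have : t + (mx - t) ∈ T := by
          have : t + (mx - t) = mx := by omega
          rw [this]; exact hmxT
        exact hdown (mx - t) t this
    rw [hT]
    have hcard : (Set.Iic mx).ncard = mx + 1 := by
      rw [← Finset.coe_Iic, Set.ncard_coe_finset, Nat.card_Iic]
    rw [hcard]
    ext t
    simp only [Set.mem_Iic, Set.mem_Iio]
    omega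


noncomputable def bta (p : ℕ → ℕ) (i : ℕ) : ℤ := (p i : ℤ) - i

noncomputable def leg (p : ℕ → ℕ) (i j : ℕ) : ℕ := Set.ncard {i' : ℕ | i < i' ∧ j < p i'}

lemma hookLen_eq (p : ℕ → ℕ) (i j : ℕ) : hookLen p i j = (p i - j) + leg p i j := rfl

variable {p : ℕ → ℕ} {N : ℕ}

lemma part_anti (hp : IsPartitionFun p) : Antitone p :=
  antitone_nat_of_succ_le hp.1

lemma bta_anti (hp : IsPartitionFun p) : StrictAnti (bta p) := by
  apply strictAnti_nat_of_succ_lt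
  intro n
  have := hp.1 n
  simp only [bta]
  push_cast
  omega

lemma strictAnti_step {b : ℕ → ℤ} (hb : StrictAnti b) {i m : ℕ} (h : i ≤ m) :
    b m ≤ b i - ((m - i : ℕ) : ℤ) := by
  induction m, h using Nat.le_induction with
  | base => simp
  | succ m hm ih =>
    have h1 : b (m + 1) < b m := hb (Nat.lt_succ_self m)
    omega

lemma bta_ge_neg (p : ℕ → ℕ) (i : ℕ) : -(i : ℤ) ≤ bta p i := by
  simp only [bta]
  omega

lemma bta_tail (hN : ∀ i, N ≤ i → p i = 0) {i : ℕ} (h : N ≤ i) : bta p i = -i := by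
  simp [bta, hN i h]

/-- Characterization of the leg length. -/
lemma leg_spec (hp : IsPartitionFun p) (hN : ∀ i', N ≤ i' → p i' = 0) (i j : ℕ) :
    ∀ t, j < p (i + 1 + t) ↔ t < leg p i j := by
  set T : Set ℕ := {t | j < p (i + 1 + t)} with hT
  have hfin : T.Finite := by
    apply Set.Finite.subset (Set.finite_Iio N)
    intro t ht
    simp only [hT, Set.mem_setOf_eq] at ht
    simp only [Set.mem_Iio]
    by_contra hc
    have : p (i + 1 + t) = 0 := hN _ (by omega)
    omega
  have hdc : ∀ t, t + 1 ∈ T → t ∈ T := by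
    intro t ht
    simp only [hT, Set.mem_setOf_eq] at ht ⊢
    have := hp.1 (i + 1 + t)
    have he : i + 1 + (t + 1) = (i + 1 + t) + 1 := by omega
    rw [he] at ht
    omega
  have hIio := lower_eq_Iio hfin hdc
  have himg : {i' : ℕ | i < i' ∧ j < p i'} = (fun t => i + 1 + t) '' T := by
    ext m
    simp only [Set.mem_setOf_eq, Set.mem_image, hT]
    constructor
    · rintro ⟨him, hjm⟩
      exact ⟨m - i - 1, by rw [show i + 1 + (m - i - 1) = m by omega]; exact hjm, by omega⟩
    · rintro ⟨t, ht, rfl⟩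
      exact ⟨by omega, ht⟩
  have hcard : leg p i j = T.ncard := by
    rw [leg, himg, Set.ncard_image_of_injective _ (fun a b hab => by omega)]
  intro t
  constructor
  · intro ht
    have : t ∈ T := ht
    rw [hIio] at this
    simpa [hcard] using this
  · intro ht
    have : t ∈ T := by rw [hIio]; simpa [← hcard] using ht
    exact this

lemma leg_pos_lt (hp : IsPartitionFun p) (hN : ∀ i', N ≤ i' → p i' = 0) {i j : ℕ}
    (h : 0 < leg p i j) : j < p (i + leg p i j) := by
  have := (leg_spec hp hN i j (leg p i j - 1)).2 (by omega)
  rwa [show i + 1 + (leg p i j - 1) = i + leg p i j by omega] at this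

lemma leg_upper (hp : IsPartitionFun p) (hN : ∀ i', N ≤ i' → p i' = 0) (i j : ℕ) :
    p (i + 1 + leg p i j) ≤ j := by
  by_contra hc
  have := (leg_spec hp hN i j (leg p i j)).1 (by omega)
  omega

noncomputable def cmap (p : ℕ → ℕ) (i j : ℕ) : ℤ := (j : ℤ) - i - leg p i j

lemma hook_cast (p : ℕ → ℕ) {i j : ℕ} (hj : j < p i) :
    (hookLen p i j : ℤ) = bta p i - cmap p i j := by
  rw [hookLen_eq]
  simp only [bta, cmap]
  push_cast [Nat.sub_add_cancel]
  omega

lemma cmap_lt (p : ℕ → ℕ) {i j : ℕ} (hj : j < p i) : cmap p i j < bta p i := by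
  have h1 := hook_cast p hj
  have h2 : 1 ≤ hookLen p i j := by
    rw [hookLen_eq]; omega
  omega

lemma cmap_not_range (hp : IsPartitionFun p) (hN : ∀ i', N ≤ i' → p i' = 0) {i j : ℕ}
    (hj : j < p i) : ∀ m, bta p m ≠ cmap p i j := by
  intro m hm
  set L := leg p i j with hL
  have hcm : cmap p i j = (j : ℤ) - i - L := rfl
  rcases le_or_gt m i with hmi | hmi
  · -- bta m ≥ bta i > cmap
    have h1 : bta p i ≤ bta p m := (bta_anti hp).antitone hmi
    have h2 := cmap_lt p hj
    omega
  · rcases le_or_gt m (i + L) with hmL | hmL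
    · -- i < m ≤ i + L, so L > 0 and bta m ≥ bta (i+L) > cmap
      have hLpos : 0 < L := by omega
      have h1 : bta p (i + L) ≤ bta p m := (bta_anti hp).antitone hmL
      have h2 : j < p (i + L) := leg_pos_lt hp hN hLpos
      have h3 : bta p (i + L) = (p (i + L) : ℤ) - (i + L) := by push_cast [bta]; ring
      omega
    · -- m ≥ i + L + 1
      have h1 : bta p m ≤ bta p (i + 1 + L) := (bta_anti hp).antitone (by omega)
      have h2 : p (i + 1 + L) ≤ j := leg_upper hp hN i j
      have h3 : bta p (i + 1 + L) = (p (i + 1 + L) : ℤ) - (i + 1 + L) := by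
        push_cast [bta]; ring
      omega


/-- Every gap below `bta p i` comes from a cell of row `i`. -/
lemma gap_cell (hp : IsPartitionFun p) (hN : ∀ i', N ≤ i' → p i' = 0) (i : ℕ) (c : ℤ)
    (hci : c < bta p i) (hcr : ∀ m, bta p m ≠ c) :
    ∃ j, j < p i ∧ cmap p i j = c := by
  set M : Set ℕ := {t | c < bta p (i + 1 + t)} with hM
  have hfin : M.Finite := by
    apply Set.Finite.subset (Set.finite_Iio (bta p 0 - c).toNat)
    intro t ht
    simp only [hM, Set.mem_setOf_eq] at ht
    have h1 : bta p (i + 1 + t) ≤ bta p 0 - ((i + 1 + t : ℕ) : ℤ) :=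
      strictAnti_step (bta_anti hp) (by omega)
    simp only [Set.mem_Iio]
    omega
  have hdc : ∀ t, t + 1 ∈ M → t ∈ M := by
    intro t ht
    simp only [hM, Set.mem_setOf_eq] at ht ⊢
    have : bta p ((i + 1 + t) + 1) < bta p (i + 1 + t) := bta_anti hp (Nat.lt_succ_self _)
    rw [show i + 1 + (t + 1) = (i + 1 + t) + 1 by omega] at ht
    omega
  have hIio := lower_eq_Iio hfin hdc
  set L := M.ncard with hLdef
  have hmem : ∀ t, c < bta p (i + 1 + t) ↔ t < L := by
    intro t
    constructor
    · intro h
      have : t ∈ M := h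
      rw [hIio] at this; exact this
    · intro h
      have : t ∈ M := by rw [hIio]; exact h
      exact this
  have hup : bta p (i + 1 + L) < c := by
    have h1 : ¬ c < bta p (i + 1 + L) := by rw [hmem]; omega
    have h2 := hcr (i + 1 + L)
    omega
  have hLlow : 0 < L → c < bta p (i + L) := by
    intro hL
    have := (hmem (L - 1)).2 (by omega)
    rwa [show i + 1 + (L - 1) = i + L by omega] at this
  have hjnn : 0 ≤ c + i + L := by
    have := bta_ge_neg p (i + 1 + L)
    push_cast at this
    omega
  set j := (c + i + L).toNat with hjdef
  have hjc : (j : ℤ) = c + i + L := by omega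
  have hbi : bta p i = (p i : ℤ) - i := rfl
  have hjpi : j < p i := by
    rcases Nat.eq_zero_or_pos L with h0 | hLpos
    · have : (j : ℤ) < (p i : ℤ) := by omega
      exact_mod_cast this
    · have h1 : bta p (i + L) ≤ bta p i - ((i + L - i : ℕ) : ℤ) :=
        strictAnti_step (bta_anti hp) (by omega)
    
      have h2 := hLlow hLpos
      have h3 : (j : ℤ) < (p i : ℤ) := by
        rw [show i + L - i = L by omega] at h1
        push_cast at h1 ⊢
        omega
      exact_mod_cast h3
  have hleg : leg p i j = L := by
    have hiff : ∀ t, j < p (i + 1 + t) ↔ t < L := by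
      intro t
      have hbt : bta p (i + 1 + t) = (p (i + 1 + t) : ℤ) - (i + 1 + t) := by
        push_cast [bta]; ring
      constructor
      · intro ht
        by_contra hc2
        push_neg at hc2
        -- t ≥ L : show p (i+1+t) ≤ j
        have h1 : bta p (i + 1 + t) ≤ bta p (i + 1 + L) - ((i + 1 + t - (i + 1 + L) : ℕ) : ℤ) :=
          strictAnti_step (bta_anti hp) (by omega)
        rw [show i + 1 + t - (i + 1 + L) = t - L by omega] at h1
        have h2 : (j : ℤ) < (p (i + 1 + t) : ℤ) := by exact_mod_cast ht
        omega
      · intro ht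
        have hLpos : 0 < L := by omega
        have h1 : bta p (i + L) ≤ bta p (i + 1 + t) - ((i + L - (i + 1 + t) : ℕ) : ℤ) :=
          strictAnti_step (bta_anti hp) (by omega)
        rw [show i + L - (i + 1 + t) = L - 1 - t by omega] at h1
        have h2 := hLlow hLpos
        have h3 : (j : ℤ) < (p (i + 1 + t) : ℤ) := by omega
        exact_mod_cast h3
    have h1 := leg_spec hp hN i j
    have h2 := (h1 (leg p i j))
    have h3 := (h1 L)
    have h4 := hiff (leg p i j)
    have h5 := hiff L
    omega
  refine ⟨j, hjpi, ?_⟩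
  rw [cmap, hleg]
  omega

/-- The fundamental counting identity. -/
lemma count_lemma (hp : IsPartitionFun p) (hN : ∀ i', N ≤ i' → p i' = 0) (i k : ℕ) :
    rowKB k p i + Set.ncard {m : ℕ | i < m ∧ bta p i - k ≤ bta p m} = k := by
  classical
  set A1 : Set ℕ := {j | j < p i ∧ hookLen p i j ≤ k} with hA1
  set A2 : Set ℕ := {m | i < m ∧ bta p i - k ≤ bta p m} with hA2
  have hA1fin : A1.Finite := Set.Finite.subset (Set.finite_Iio (p i)) (fun j hj => hj.1)
  have hA2fin : A2.Finite := by
    apply Set.Finite.subset (Set.finite_Icc i (i + k))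
    rintro m ⟨hm1, hm2⟩
    have h1 : bta p m ≤ bta p i - ((m - i : ℕ) : ℤ) := strictAnti_step (bta_anti hp) (by omega)
    simp only [Set.mem_Icc]
    omega
  set W : Finset ℤ := Finset.Ico (bta p i - k) (bta p i) with hW
  have him : (cmap p i '' A1) ∪ (bta p '' A2) = ↑W := by
    ext x
    simp only [Set.mem_union, Set.mem_image, Finset.coe_Ico, Set.mem_Ico, hW]
    constructor
    · rintro (⟨j, ⟨hj1, hj2⟩, rfl⟩ | ⟨m, ⟨hm1, hm2⟩, rfl⟩)
      · have h1 := hook_cast p hj1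
        have h2 := cmap_lt p hj1
        have h3 : (hookLen p i j : ℤ) ≤ k := by exact_mod_cast hj2
        omega
      · have h1 : bta p m < bta p i := bta_anti hp hm1
        omega
    · rintro ⟨hx1, hx2⟩
      by_cases hx : ∃ m, bta p m = x
      · obtain ⟨m, hm⟩ := hx
        right
        refine ⟨m, ⟨?_, by omega⟩, hm⟩
        have : bta p m < bta p i := by omega
        exact ((bta_anti hp).lt_iff_gt).1 this
      · push_neg at hx
        left
        obtain ⟨j, hj1, hj2⟩ := gap_cell hp hN i x (by omega) hx
        refine ⟨j, ⟨hj1, ?_⟩, hj2⟩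
        have h1 := hook_cast p hj1
        have h2 : (hookLen p i j : ℤ) ≤ (k : ℤ) := by omega
        exact_mod_cast h2
  have hmono : ∀ a b : ℕ, a < b → cmap p i a < cmap p i b := by
    intro a b hab2
    have hlegle : leg p i b ≤ leg p i a := by
      apply Set.ncard_le_ncard
      · intro m hm
        simp only [Set.mem_setOf_eq] at hm ⊢
        exact ⟨hm.1, by omega⟩
      · apply Set.Finite.subset (Set.finite_Iio N)
        rintro m ⟨hm1, hm2⟩
        simp only [Set.mem_Iio]
        by_contra hc
        have := hN m (by omega)
        omega
    simp only [cmap]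
    omega
  have hinj1 : Set.InjOn (cmap p i) A1 := by
    intro a _ b _ hab
    rcases lt_trichotomy a b with h | h | h
    · exact absurd hab (ne_of_lt (hmono a b h))
    · exact h
    · exact absurd hab.symm (ne_of_lt (hmono b a h))
  have hinj2 : Set.InjOn (bta p) A2 := ((bta_anti hp).injective).injOn
  have hdisj : Disjoint (cmap p i '' A1) (bta p '' A2) := by
    rw [Set.disjoint_left]
    rintro x ⟨j, hj, rfl⟩ ⟨m, hm, hbm⟩
    exact cmap_not_range hp hN hj.1 m hbm
  have hcount : (cmap p i '' A1).ncard + (bta p '' A2).ncard = W.card := by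
    rw [← Set.ncard_coe_finset, ← him,
      Set.ncard_union_eq hdisj (hA1fin.image _) (hA2fin.image _)]
  rw [Set.ncard_image_of_injOn hinj1, Set.ncard_image_of_injOn hinj2] at hcount
  have hWcard : W.card = k := by
    rw [hW, Int.card_Ico]
    omega
  rw [rowKB]
  rw [hWcard] at hcount
  exact hcount


lemma core_closure {k : ℕ} (hp : IsPartitionFun p) (hN : ∀ i', N ≤ i' → p i' = 0)
    (hc : IsCore (k + 1) p) (i : ℕ) :
    ∃ m, i < m ∧ bta p m = bta p i - (k + 1) := by
  by_cases hx : ∃ m, bta p m = bta p i - (k + 1)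
  · obtain ⟨m, hm⟩ := hx
    refine ⟨m, ?_, hm⟩
    have : bta p m < bta p i := by omega
    exact ((bta_anti hp).lt_iff_gt).1 this
  · push_neg at hx
    obtain ⟨j, hj1, hj2⟩ := gap_cell hp hN i (bta p i - (k + 1)) (by omega) hx
    have h1 := hook_cast p hj1
    have h2 : (hookLen p i j : ℤ) = ((k + 1 : ℕ) : ℤ) := by push_cast; omega
    exact absurd (by exact_mod_cast h2) (hc i j hj1)

lemma closure_core {k : ℕ} (hp : IsPartitionFun p) (hN : ∀ i', N ≤ i' → p i' = 0)
    (h : ∀ i, ∃ m, bta p m = bta p i - (k + 1)) : IsCore (k + 1) p := by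
  intro i j hj hhook
  have h1 := hook_cast p hj
  have h2 : cmap p i j = bta p i - (k + 1) := by
    rw [hhook] at h1
    push_cast at h1
    omega
  obtain ⟨m, hm⟩ := h i
  exact cmap_not_range hp hN hj m (by omega)

/-- Forward direction: properties of `rowKB` for a core. -/
lemma forward {k : ℕ} (hp : IsPartitionFun p) (hN : ∀ i', N ≤ i' → p i' = 0)
    (hc : IsCore (k + 1) p) :
    (∀ i, rowKB k p i ≤ k) ∧ (∀ i, rowKB k p (i + 1) ≤ rowKB k p i) ∧
    (∀ i, N ≤ i → rowKB k p i = 0) ∧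
    (∀ i, bta p (i + ((k + 1) - rowKB k p i)) = bta p i - (k + 1)) := by
  -- for each i pick the witness m i
  have key : ∀ i, rowKB k p i ≤ k ∧
      bta p (i + ((k + 1) - rowKB k p i)) = bta p i - (k + 1) ∧
      i + ((k + 1) - rowKB k p i) = i + 1 + (k - rowKB k p i) := by
    intro i
    obtain ⟨m, him, hbm⟩ := core_closure hp hN hc i
    have hset : {m' : ℕ | i < m' ∧ bta p i - k ≤ bta p m'} = Set.Ioo i m := by
      ext m'
      simp only [Set.mem_setOf_eq, Set.mem_Ioo]
      constructor
      · rintro ⟨h1, h2⟩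
        refine ⟨h1, ?_⟩
        have : bta p m < bta p m' := by push_cast at h2 ⊢; omega
        exact ((bta_anti hp).lt_iff_gt).1 this
      · rintro ⟨h1, h2⟩
        refine ⟨h1, ?_⟩
        have : bta p m < bta p m' := bta_anti hp h2
        push_cast
        omega
    have hcnt := count_lemma hp hN i k
    rw [hset] at hcnt
    have hioo : (Set.Ioo i m).ncard = m - i - 1 := by
      rw [← Finset.coe_Ioo, Set.ncard_coe_finset, Nat.card_Ioo]
    rw [hioo] at hcnt
    have h1 : rowKB k p i ≤ k := by omega
    have h2 : i + ((k + 1) - rowKB k p i) = m := by omega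
    exact ⟨h1, by rw [h2]; exact hbm, by omega⟩
  refine ⟨fun i => (key i).1, ?_, ?_, fun i => (key i).2.1⟩
  · intro i
    obtain ⟨hk1, hb1, he1⟩ := key i
    obtain ⟨hk2, hb2, he2⟩ := key (i + 1)
    set m1 := i + ((k + 1) - rowKB k p i)
    set m2 := i + 1 + ((k + 1) - rowKB k p (i + 1))
    have hlt : bta p m2 < bta p m1 := by
      rw [hb1, hb2]
      have : bta p (i + 1) < bta p i := bta_anti hp (Nat.lt_succ_self i)
      omega
    have : m1 < m2 := ((bta_anti hp).lt_iff_gt).1 hlt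
    omega
  · intro i hi
    have h0 : p i = 0 := hN i hi
    rw [rowKB]
    convert Set.ncard_empty ℕ
    ext j
    simp only [Set.mem_setOf_eq, Set.mem_empty_iff_false, iff_false, not_and]
    intro hj
    omega


/-- Uniqueness: the beta function is determined by the recurrence and the tail. -/
lemma unique_b {b b' : ℕ → ℤ} {s : ℕ → ℕ} {k N : ℕ} (hs : ∀ i, 1 ≤ s i)
    (hb : ∀ i, N ≤ i → b i = -i) (hb' : ∀ i, N ≤ i → b' i = -i)
    (hr : ∀ i, b (i + s i) = b i - (k + 1)) (hr' : ∀ i, b' (i + s i) = b' i - (k + 1)) :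
    b = b' := by
  have h : ∀ d i, N ≤ i + d → b i = b' i := by
    intro d
    induction d with
    | zero =>
      intro i hi
      rw [hb i (by omega), hb' i (by omega)]
    | succ d ih =>
      intro i hi
      by_cases hdi : N ≤ i + d
      · exact ih i hdi
      · have h2 : b (i + s i) = b' (i + s i) := ih (i + s i) (by have := hs i; omega)
        have h3 := hr i
        have h4 := hr' i
        omega
  funext i
  exact h N i (by omega)

section Construct

variable {k : ℕ} {lam : ℕ → ℕ} {N : ℕ}

/-- Construction of the inverse: given a k-bounded partition `lam`, vanishing from `N` on,
build the beta function of the corresponding core. -/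

noncomputable def gfun (k : ℕ) (lam : ℕ → ℕ) (i : ℕ) : ℕ := i + (k + 1 - lam i)

noncomputable def btac (k : ℕ) (lam : ℕ → ℕ) (N : ℕ) (i : ℕ) : ℤ :=
  ((k + 1) * N : ℤ) - ((gfun k lam)^[N] i : ℤ)

lemma gfun_lt (hbd : ∀ i, lam i ≤ k) (i : ℕ) : i < gfun k lam i := by
  have := hbd i
  simp only [gfun]
  omega

lemma gfun_mono (hlam : ∀ i, lam (i + 1) ≤ lam i) (hbd : ∀ i, lam i ≤ k) :
    StrictMono (gfun k lam) := by
  apply strictMono_nat_of_lt_succ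
  intro i
  have h1 := hlam i
  have h2 := hbd i
  have h3 := hbd (i + 1)
  simp only [gfun]
  omega

lemma gfun_iter_ge (hbd : ∀ i, lam i ≤ k) (t i : ℕ) : i + t ≤ (gfun k lam)^[t] i := by
  induction t with
  | zero => simp
  | succ t ih =>
    rw [Function.iterate_succ_apply']
    have := gfun_lt hbd ((gfun k lam)^[t] i)
    omega

lemma gfun_iter_tail (hbd : ∀ i, lam i ≤ k) (hNl : ∀ i, N ≤ i → lam i = 0) (t : ℕ) :
    ∀ i, N ≤ i → (gfun k lam)^[t] i = i + t * (k + 1) := by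
  induction t with
  | zero => intro i _; simp
  | succ t ih =>
    intro i hi
    rw [Function.iterate_succ_apply]
    have hgi : gfun k lam i = i + (k + 1) := by
      simp only [gfun, hNl i hi]
      omega
    rw [hgi, ih (i + (k + 1)) (by omega)]
    ring

lemma btac_anti (hlam : ∀ i, lam (i + 1) ≤ lam i) (hbd : ∀ i, lam i ≤ k) :
    StrictAnti (btac k lam N) := by
  intro a b hab
  simp only [btac]
  have : (gfun k lam)^[N] a < (gfun k lam)^[N] b :=
    (gfun_mono hlam hbd).iterate N hab
  omega

lemma btac_rec (hbd : ∀ i, lam i ≤ k) (hNl : ∀ i, N ≤ i → lam i = 0) (i : ℕ) :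
    btac k lam N (gfun k lam i) = btac k lam N i - (k + 1) := by
  have h1 : (gfun k lam)^[N] (gfun k lam i) = gfun k lam ((gfun k lam)^[N] i) := by
    rw [← Function.iterate_succ_apply, Function.iterate_succ_apply']
  have h2 : N ≤ (gfun k lam)^[N] i := by
    have := gfun_iter_ge hbd N i
    omega
  have h3 : gfun k lam ((gfun k lam)^[N] i) = (gfun k lam)^[N] i + (k + 1) := by
    simp only [gfun, hNl _ h2]
    omega
  simp only [btac, h1, h3]
  push_cast
  ring

lemma btac_tail (hbd : ∀ i, lam i ≤ k) (hNl : ∀ i, N ≤ i → lam i = 0) {i : ℕ} (hi : N ≤ i) :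
    btac k lam N i = -i := by
  simp only [btac, gfun_iter_tail hbd hNl N i hi]
  push_cast
  ring

lemma btac_ge (hlam : ∀ i, lam (i + 1) ≤ lam i) (hbd : ∀ i, lam i ≤ k)
    (hNl : ∀ i, N ≤ i → lam i = 0) (i : ℕ) : -(i : ℤ) ≤ btac k lam N i := by
  rcases le_or_gt N i with h | h
  · rw [btac_tail hbd hNl h]
  · have h1 : btac k lam N N ≤ btac k lam N i - ((N - i : ℕ) : ℤ) :=
      strictAnti_step (btac_anti hlam hbd) (by omega)
    rw [btac_tail hbd hNl (le_refl N)] at h1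
    omega

end Construct


/-- Surjectivity construction. -/
lemma construct (k : ℕ) (lam : ℕ → ℕ) (hl : IsPartitionFun lam) (hbd : ∀ i, lam i ≤ k) :
    ∃ p : ℕ → ℕ, IsPartitionFun p ∧ IsCore (k + 1) p ∧ ∀ i, rowKB k p i = lam i := by
  obtain ⟨hl1, N, hNl⟩ := hl
  set b := btac k lam N with hbdef
  have hanti : StrictAnti b := btac_anti hl1 hbd
  have hge : ∀ i : ℕ, -(i : ℤ) ≤ b i := btac_ge hl1 hbd hNl
  set p : ℕ → ℕ := fun i => (b i + i).toNat with hpdef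
  have hpc : ∀ i, (p i : ℤ) = b i + i := by
    intro i
    simp only [hpdef]
    have := hge i
    omega
  have hbta : ∀ i, bta p i = b i := by
    intro i
    rw [bta, hpc]
    ring
  have hpart : IsPartitionFun p := by
    constructor
    · intro i
      have h1 : b (i + 1) < b i := hanti (Nat.lt_succ_self i)
      have h2 := hpc i
      have h3 := hpc (i + 1)
      have : (p (i + 1) : ℤ) ≤ (p i : ℤ) := by push_cast at h3 ⊢; omega
      exact_mod_cast this
    · refine ⟨N, fun i hi => ?_⟩
      have h1 : b i = -i := btac_tail hbd hNl hi
      have h2 := hpc i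
      omega
  have hNp : ∀ i, N ≤ i → p i = 0 := by
    intro i hi
    have h1 : b i = -i := btac_tail hbd hNl hi
    have h2 := hpc i
    omega
  have hrec : ∀ i, ∃ m, bta p m = bta p i - (k + 1) := by
    intro i
    exact ⟨gfun k lam i, by rw [hbta, hbta]; exact btac_rec hbd hNl i⟩
  have hcore : IsCore (k + 1) p := closure_core hpart hNp hrec
  refine ⟨p, hpart, hcore, fun i => ?_⟩
  have hcnt := count_lemma hpart hNp i k
  have hset : {m : ℕ | i < m ∧ bta p i - k ≤ bta p m} = Set.Ioo i (gfun k lam i) := by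
    ext m
    simp only [Set.mem_setOf_eq, Set.mem_Ioo]
    have hg : bta p (gfun k lam i) = bta p i - (k + 1) := by
      rw [hbta, hbta]; exact btac_rec hbd hNl i
    constructor
    · rintro ⟨h1, h2⟩
      refine ⟨h1, ?_⟩
      have : bta p m < bta p i := bta_anti hpart h1
      have hlt : bta p (gfun k lam i) < bta p m := by push_cast at h2 ⊢; omega
      exact ((bta_anti hpart).lt_iff_gt).1 hlt
    · rintro ⟨h1, h2⟩
      refine ⟨h1, ?_⟩
      have : bta p (gfun k lam i) < bta p m := bta_anti hpart h2
      push_cast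
      omega
  rw [hset] at hcnt
  have hioo : (Set.Ioo i (gfun k lam i)).ncard = gfun k lam i - i - 1 := by
    rw [← Finset.coe_Ioo, Set.ncard_coe_finset, Nat.card_Ioo]
  rw [hioo] at hcnt
  have hgi : gfun k lam i = i + (k + 1 - lam i) := rfl
  have := hbd i
  omega

end StmtAux

/-- The map `𝔭` sending a `(k+1)`-core `γ` to the sequence whose `i`-th entry is the
number of cells with `k`-bounded hook in row `i` of `γ` is a bijection from
`(k+1)`-cores onto `k`-bounded partitions. -/
theorem stmt2 (k : ℕ) :
    ∃ f : {γ : ℕ → ℕ // IsPartitionFun γ ∧ IsCore (k + 1) γ} →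
          {lam : ℕ → ℕ // IsPartitionFun lam ∧ ∀ i, lam i ≤ k},
      (∀ γ, ∀ i, (f γ).1 i = rowKB k γ.1 i) ∧ Function.Bijective f := by
  classical
  have hmem : ∀ γ : {γ : ℕ → ℕ // IsPartitionFun γ ∧ IsCore (k + 1) γ},
      IsPartitionFun (fun i => rowKB k γ.1 i) ∧ ∀ i, rowKB k γ.1 i ≤ k := by
    rintro ⟨p, hp, hc⟩
    obtain ⟨N, hN⟩ := hp.2
    obtain ⟨h1, h2, h3, _⟩ := StmtAux.forward hp hN hc
    exact ⟨⟨h2, ⟨N, h3⟩⟩, h1⟩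
  refine ⟨fun γ => ⟨fun i => rowKB k γ.1 i, hmem γ⟩, fun γ i => rfl, ?_, ?_⟩
  · -- injective
    rintro ⟨p, hp, hc⟩ ⟨p', hp', hc'⟩ h
    have hfun : ∀ i, rowKB k p i = rowKB k p' i := by
      intro i
      exact congrFun (congrArg Subtype.val h) i
    obtain ⟨N1, hN1⟩ := hp.2
    obtain ⟨N2, hN2⟩ := hp'.2
    set N := max N1 N2 with hNdef
    have hN : ∀ i, N ≤ i → p i = 0 := fun i hi => hN1 i (by omega)
    have hN' : ∀ i, N ≤ i → p' i = 0 := fun i hi => hN2 i (by omega)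
    obtain ⟨h1, _, _, h4⟩ := StmtAux.forward hp hN hc
    obtain ⟨h1', _, _, h4'⟩ := StmtAux.forward hp' hN' hc'
    have h4'' : ∀ i, StmtAux.bta p' (i + ((k + 1) - rowKB k p i)) =
        StmtAux.bta p' i - (k + 1) := by
      intro i
      rw [hfun i]
      exact h4' i
    have hb : StmtAux.bta p = StmtAux.bta p' := by
      apply StmtAux.unique_b (s := fun i => (k + 1) - rowKB k p i) (N := N)
      · intro i
        have := h1 i
        omega
      · intro i hi
        exact StmtAux.bta_tail hN hi
      · intro i hi
        exact StmtAux.bta_tail hN' hi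
      · exact h4
      · exact h4''
    have hpp : p = p' := by
      funext i
      have := congrFun hb i
      simp only [StmtAux.bta] at this
      omega
    exact Subtype.ext hpp
  · -- surjective
    rintro ⟨lam, hl, hbd⟩
    obtain ⟨p, hpart, hcore, hrow⟩ := StmtAux.construct k lam hl hbd
    exact ⟨⟨p, hpart, hcore⟩, Subtype.ext (funext hrow)⟩
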